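/- Let q ∈ (0,1], let n be a nonnegative integer, let real coefficients b^n_{ijk} be given for all nonnegative i, j, k with i + j + k = n, and let γ^n(u,v) = Σ_{i+j+k=n} b^n_{ijk} B^n_{ijk}(u,v). Define, for nonnegative i, j, k with i + j + k = n + 1 (with the convention that b^n with any negative index is 0, and the term with factor i/(i+j) or j/(i+j) is omitted when i + j = 0): b^{n+1}_{ijk} = ([n+1−k]/[n+1])·(i/(i+j))·q^k·b^n_{i−1,j,k} + ([n+1−k]/[n+1])·(j/(i+j))·q^k·b^n_{i,j−1,k} + ([k]/[n+1])·b^n_{i,j,k−1}. Then γ^n(u,v) = Σ_{i+j+k=n+1} b^{n+1}_{ijk} B^{n+1}_{ijk}(u,v) for all real u, v. -/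

import Mathlib

open Finset

/-- The q-integer [r] = 1 + q + ... + q^(r-1). -/
noncomputable def qInt (q : ℝ) (r : ℕ) : ℝ := ∑ s ∈ Finset.range r, q ^ s

/-- The q-factorial [r]!. -/
noncomputable def qFact (q : ℝ) : ℕ → ℝ
  | 0 => 1
  | r + 1 => qInt q (r + 1) * qFact q r

/-- The q-binomial coefficient [i choose j]_q (zero unless i ≥ j ≥ 0). -/
noncomputable def qBinom (q : ℝ) (i j : ℕ) : ℝ :=
  if j ≤ i then qFact q i / (qFact q j * qFact q (i - j)) else 0

/-- The q-binomial coefficient with integer indices, zero unless i ≥ j ≥ 0. -/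
noncomputable def qBinomZ (q : ℝ) (i j : ℤ) : ℝ :=
  if 0 ≤ j ∧ j ≤ i then qFact q i.toNat / (qFact q j.toNat * qFact q (i - j).toNat) else 0

/-- The triangular q-Bernstein polynomial B^n_{ijk}(u,v)
    (meaningful for i + j + k = n). -/
noncomputable def triB (q : ℝ) (n i j k : ℕ) (u v : ℝ) : ℝ :=
  qBinom q n k * (Nat.choose (i + j) i : ℝ) * u ^ i * v ^ j *
    ∏ s ∈ Finset.range k, (1 - q ^ s * u - q ^ s * v)

/-- The triangular q-Bernstein polynomial with integer indices; by convention it is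
    zero whenever any of the indices is negative. -/
noncomputable def triBZ (q : ℝ) (n : ℕ) (i j k : ℤ) (u v : ℝ) : ℝ :=
  if 0 ≤ i ∧ 0 ≤ j ∧ 0 ≤ k then triB q n i.toNat j.toNat k.toNat u v else 0

/-- The classical triangular Bernstein polynomial b^n_{ijk}(u,v). -/
noncomputable def triBern (n i j k : ℕ) (u v : ℝ) : ℝ :=
  (Nat.factorial n : ℝ) /
      ((Nat.factorial i : ℝ) * (Nat.factorial j : ℝ) * (Nat.factorial k : ℝ)) *
    u ^ i * v ^ j * (1 - u - v) ^ k

/-- The set of triples (i, j, k) of nonnegative integers with i + j + k = n. -/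
def simplex (n : ℕ) : Finset (ℕ × ℕ × ℕ) :=
  (Finset.range (n + 1) ×ˢ Finset.range (n + 1) ×ˢ Finset.range (n + 1)).filter
    (fun p => p.1 + p.2.1 + p.2.2 = n)

lemma qInt_pos {q : ℝ} (hq0 : 0 < q) {r : ℕ} (hr : 0 < r) : 0 < qInt q r := by
  apply Finset.sum_pos (fun s _ => pow_pos hq0 s)
  exact Finset.nonempty_range_iff.mpr hr.ne'

lemma qFact_pos {q : ℝ} (hq0 : 0 < q) : ∀ r, 0 < qFact q r
  | 0 => one_pos
  | r + 1 => mul_pos (qInt_pos hq0 r.succ_pos) (qFact_pos hq0 r)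

lemma mem_simplex {n : ℕ} {p : ℕ × ℕ × ℕ} : p ∈ simplex n ↔ p.1 + p.2.1 + p.2.2 = n := by
  simp only [simplex, Finset.mem_filter, Finset.mem_product, Finset.mem_range]
  constructor
  · rintro ⟨_, h⟩; exact h
  · intro h; exact ⟨⟨by omega, by omega, by omega⟩, h⟩

lemma qBinom_succ_left {q : ℝ} (hq0 : 0 < q) {n k : ℕ} (hk : k ≤ n) :
    qBinom q (n + 1) k = qInt q (n + 1) * qBinom q n k / qInt q (n + 1 - k) := by
  have h1 : n + 1 - k = (n - k) + 1 := by omega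
  rw [qBinom, qBinom, if_pos (by omega), if_pos hk, h1]
  show qInt q (n+1) * qFact q n / (qFact q k * (qInt q ((n-k)+1) * qFact q (n - k))) = _
  have h2 := (qFact_pos hq0 k).ne'
  have h3 := (qFact_pos hq0 (n - k)).ne'
  have h4 := (qInt_pos hq0 (Nat.succ_pos (n - k))).ne'
  field_simp

lemma qBinom_succ_both {q : ℝ} (hq0 : 0 < q) {n k : ℕ} (hk : k ≤ n) :
    qBinom q (n + 1) (k + 1) = qInt q (n + 1) * qBinom q n k / qInt q (k + 1) := by
  have h1 : n + 1 - (k + 1) = n - k := by omega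
  rw [qBinom, qBinom, if_pos (by omega), if_pos hk, h1]
  show qInt q (n+1) * qFact q n / ((qInt q (k+1) * qFact q k) * qFact q (n - k)) = _
  have h2 := (qFact_pos hq0 k).ne'
  have h3 := (qFact_pos hq0 (n - k)).ne'
  have h4 := (qInt_pos hq0 (Nat.succ_pos k)).ne'
  field_simp

lemma choose_cast1 (i j : ℕ) :
    ((Nat.choose (i + j + 1) (i + 1) : ℕ) : ℝ) =
      ((i : ℝ) + (j : ℝ) + 1) * (Nat.choose (i + j) i : ℝ) / ((i : ℝ) + 1) := by
  have h := Nat.add_one_mul_choose_eq (i + j) i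
  have : ((i + j + 1) * Nat.choose (i + j) i : ℕ) = (Nat.choose (i + j + 1) (i + 1)) * (i + 1) := h
  have hc : ((i + j + 1 : ℕ) : ℝ) * (Nat.choose (i + j) i : ℝ)
      = (Nat.choose (i + j + 1) (i + 1) : ℝ) * ((i + 1 : ℕ) : ℝ) := by exact_mod_cast congrArg (Nat.cast (R := ℝ)) this
  have hi : ((i : ℝ) + 1) ≠ 0 := by positivity
  push_cast at hc
  field_simp
  linarith [hc]

lemma choose_cast2 (i j : ℕ) :
    ((Nat.choose (i + (j + 1)) i : ℕ) : ℝ) =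
      ((i : ℝ) + (j : ℝ) + 1) * (Nat.choose (i + j) i : ℝ) / ((j : ℝ) + 1) := by
  have hsym1 : Nat.choose (i + j) j = Nat.choose (i + j) i := by
    have := Nat.choose_symm (Nat.le_add_right i j)
    simpa [Nat.add_sub_cancel_left] using this
  have hsym2 : Nat.choose (i + (j + 1)) i = Nat.choose (i + j + 1) (j + 1) := by
    have := Nat.choose_symm (show j + 1 ≤ i + j + 1 by omega)
    rw [show i + (j+1) = i + j + 1 by omega]
    rw [← this, show i + j + 1 - (j+1) = i by omega]
  have h := Nat.add_one_mul_choose_eq (i + j) j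
  have hc : ((i + j + 1 : ℕ) : ℝ) * (Nat.choose (i + j) j : ℝ)
      = (Nat.choose (i + j + 1) (j + 1) : ℝ) * ((j + 1 : ℕ) : ℝ) := by
    exact_mod_cast congrArg (Nat.cast (R := ℝ)) h
  rw [hsym2]
  rw [hsym1] at hc
  have hj : ((j : ℝ) + 1) ≠ 0 := by positivity
  push_cast at hc
  field_simp
  linarith [hc]

lemma elev {q : ℝ} (hq0 : 0 < q) {n i j k : ℕ} (h : i + j + k = n) (u v : ℝ) :
    triB q n i j k u v =
      qInt q (n + 1 - k) / qInt q (n + 1) * (((i : ℝ) + 1) / ((i : ℝ) + (j : ℝ) + 1)) * q ^ k *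
          triB q (n + 1) (i + 1) j k u v +
        qInt q (n + 1 - k) / qInt q (n + 1) * (((j : ℝ) + 1) / ((i : ℝ) + (j : ℝ) + 1)) * q ^ k *
          triB q (n + 1) i (j + 1) k u v +
        qInt q (k + 1) / qInt q (n + 1) * triB q (n + 1) i j (k + 1) u v := by
  have hk : k ≤ n := by omega
  have hN1 : qInt q (n + 1) ≠ 0 := (qInt_pos hq0 (Nat.succ_pos n)).ne'
  have hNk : qInt q (n + 1 - k) ≠ 0 := (qInt_pos hq0 (by omega)).ne'
  have hKk : qInt q (k + 1) ≠ 0 := (qInt_pos hq0 (Nat.succ_pos k)).ne'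
  have hi : ((i : ℝ) + 1) ≠ 0 := by positivity
  have hj : ((j : ℝ) + 1) ≠ 0 := by positivity
  have hij : ((i : ℝ) + (j : ℝ) + 1) ≠ 0 := by positivity
  simp only [triB, qBinom_succ_left hq0 hk, qBinom_succ_both hq0 hk,
    show (i + 1) + j = i + j + 1 by omega, choose_cast1 i j, choose_cast2 i j,
    Finset.prod_range_succ, pow_succ]
  field_simp
  ring

lemma shift1 (n : ℕ) (f g : ℕ × ℕ × ℕ → ℝ)
    (h : ∀ p ∈ simplex (n + 1), 0 < p.1 → g p = f (p.1 - 1, p.2.1, p.2.2)) :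
    ∑ p ∈ simplex (n + 1), (if 0 < p.1 then g p else 0) = ∑ p ∈ simplex n, f p := by
  rw [← Finset.sum_filter]
  symm
  apply Finset.sum_nbij' (i := fun p => (p.1 + 1, p.2.1, p.2.2))
    (j := fun p => (p.1 - 1, p.2.1, p.2.2))
  · rintro ⟨x, y, z⟩ ha
    simp only [Finset.mem_filter, mem_simplex] at *
    omega
  · rintro ⟨x, y, z⟩ ha
    simp only [Finset.mem_filter, mem_simplex] at *
    omega
  · rintro ⟨x, y, z⟩ _; simp
  · rintro ⟨x, y, z⟩ ha
    obtain ⟨h1, h2⟩ := by simpa only [Finset.mem_filter, mem_simplex] using ha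
    simp only [Prod.mk.injEq, eq_self_iff_true, and_true, true_and]
    omega
  · rintro ⟨x, y, z⟩ ha
    rw [h (x + 1, y, z) (by simp only [mem_simplex] at *; omega) (Nat.succ_pos x)]
    simp

lemma shift2 (n : ℕ) (f g : ℕ × ℕ × ℕ → ℝ)
    (h : ∀ p ∈ simplex (n + 1), 0 < p.2.1 → g p = f (p.1, p.2.1 - 1, p.2.2)) :
    ∑ p ∈ simplex (n + 1), (if 0 < p.2.1 then g p else 0) = ∑ p ∈ simplex n, f p := by
  rw [← Finset.sum_filter]
  symm
  apply Finset.sum_nbij' (i := fun p => (p.1, p.2.1 + 1, p.2.2))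
    (j := fun p => (p.1, p.2.1 - 1, p.2.2))
  · rintro ⟨x, y, z⟩ ha
    simp only [Finset.mem_filter, mem_simplex] at *
    omega
  · rintro ⟨x, y, z⟩ ha
    simp only [Finset.mem_filter, mem_simplex] at *
    omega
  · rintro ⟨x, y, z⟩ _; simp
  · rintro ⟨x, y, z⟩ ha
    obtain ⟨h1, h2⟩ := by simpa only [Finset.mem_filter, mem_simplex] using ha
    simp only [Prod.mk.injEq, eq_self_iff_true, and_true, true_and]
    omega
  · rintro ⟨x, y, z⟩ ha
    rw [h (x, y + 1, z) (by simp only [mem_simplex] at *; omega) (Nat.succ_pos y)]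
    simp

lemma shift3 (n : ℕ) (f g : ℕ × ℕ × ℕ → ℝ)
    (h : ∀ p ∈ simplex (n + 1), 0 < p.2.2 → g p = f (p.1, p.2.1, p.2.2 - 1)) :
    ∑ p ∈ simplex (n + 1), (if 0 < p.2.2 then g p else 0) = ∑ p ∈ simplex n, f p := by
  rw [← Finset.sum_filter]
  symm
  apply Finset.sum_nbij' (i := fun p => (p.1, p.2.1, p.2.2 + 1))
    (j := fun p => (p.1, p.2.1, p.2.2 - 1))
  · rintro ⟨x, y, z⟩ ha
    simp only [Finset.mem_filter, mem_simplex] at *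
    omega
  · rintro ⟨x, y, z⟩ ha
    simp only [Finset.mem_filter, mem_simplex] at *
    omega
  · rintro ⟨x, y, z⟩ _; simp
  · rintro ⟨x, y, z⟩ ha
    obtain ⟨h1, h2⟩ := by simpa only [Finset.mem_filter, mem_simplex] using ha
    simp only [Prod.mk.injEq, eq_self_iff_true, and_true, true_and]
    omega
  · rintro ⟨x, y, z⟩ ha
    rw [h (x, y, z + 1) (by simp only [mem_simplex] at *; omega) (Nat.succ_pos z)]
    simp

/-- degree elevation for the q-Bézier representation. -/
theorem stmt6 (q : ℝ) (hq0 : 0 < q) (hq1 : q ≤ 1) (n : ℕ)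
    (b b' : ℕ → ℕ → ℕ → ℝ)
    (hb' : ∀ i j k, i + j + k = n + 1 →
      b' i j k =
        (if 0 < i then
            qInt q (n + 1 - k) / qInt q (n + 1) * ((i : ℝ) / ((i : ℝ) + (j : ℝ))) * q ^ k *
              b (i - 1) j k
          else 0) +
        (if 0 < j then
            qInt q (n + 1 - k) / qInt q (n + 1) * ((j : ℝ) / ((i : ℝ) + (j : ℝ))) * q ^ k *
              b i (j - 1) k
          else 0) +
        (if 0 < k then qInt q k / qInt q (n + 1) * b i j (k - 1) else 0))
    (u v : ℝ) :
    ∑ p ∈ simplex n, b p.1 p.2.1 p.2.2 * triB q n p.1 p.2.1 p.2.2 u v =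
      ∑ p ∈ simplex (n + 1), b' p.1 p.2.1 p.2.2 * triB q (n + 1) p.1 p.2.1 p.2.2 u v := by
  -- the three "target" summands over `simplex n`
  set F1 : ℕ × ℕ × ℕ → ℝ := fun r =>
    qInt q (n + 1 - r.2.2) / qInt q (n + 1) *
        (((r.1 : ℝ) + 1) / ((r.1 : ℝ) + (r.2.1 : ℝ) + 1)) * q ^ r.2.2 *
      (b r.1 r.2.1 r.2.2 * triB q (n + 1) (r.1 + 1) r.2.1 r.2.2 u v) with hF1
  set F2 : ℕ × ℕ × ℕ → ℝ := fun r =>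
    qInt q (n + 1 - r.2.2) / qInt q (n + 1) *
        (((r.2.1 : ℝ) + 1) / ((r.1 : ℝ) + (r.2.1 : ℝ) + 1)) * q ^ r.2.2 *
      (b r.1 r.2.1 r.2.2 * triB q (n + 1) r.1 (r.2.1 + 1) r.2.2 u v) with hF2
  set F3 : ℕ × ℕ × ℕ → ℝ := fun r =>
    qInt q (r.2.2 + 1) / qInt q (n + 1) *
      (b r.1 r.2.1 r.2.2 * triB q (n + 1) r.1 r.2.1 (r.2.2 + 1) u v) with hF3
  have key : ∀ p ∈ simplex (n + 1),
      b' p.1 p.2.1 p.2.2 * triB q (n + 1) p.1 p.2.1 p.2.2 u v =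
        (if 0 < p.1 then
            qInt q (n + 1 - p.2.2) / qInt q (n + 1) *
                ((p.1 : ℝ) / ((p.1 : ℝ) + (p.2.1 : ℝ))) * q ^ p.2.2 *
              b (p.1 - 1) p.2.1 p.2.2 * triB q (n + 1) p.1 p.2.1 p.2.2 u v
          else 0) +
        (if 0 < p.2.1 then
            qInt q (n + 1 - p.2.2) / qInt q (n + 1) *
                ((p.2.1 : ℝ) / ((p.1 : ℝ) + (p.2.1 : ℝ))) * q ^ p.2.2 *
              b p.1 (p.2.1 - 1) p.2.2 * triB q (n + 1) p.1 p.2.1 p.2.2 u v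
          else 0) +
        (if 0 < p.2.2 then
            qInt q (p.2.2) / qInt q (n + 1) * b p.1 p.2.1 (p.2.2 - 1) *
              triB q (n + 1) p.1 p.2.1 p.2.2 u v
          else 0) := by
    intro p hp
    rw [hb' p.1 p.2.1 p.2.2 (mem_simplex.mp hp)]
    simp only [add_mul, ite_mul, zero_mul]
  have e1 : ∑ p ∈ simplex (n + 1),
      (if 0 < p.1 then
          qInt q (n + 1 - p.2.2) / qInt q (n + 1) *
              ((p.1 : ℝ) / ((p.1 : ℝ) + (p.2.1 : ℝ))) * q ^ p.2.2 *
            b (p.1 - 1) p.2.1 p.2.2 * triB q (n + 1) p.1 p.2.1 p.2.2 u v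
        else 0) = ∑ p ∈ simplex n, F1 p := by
    apply shift1
    rintro ⟨x, y, z⟩ hp hx
    obtain ⟨m, rfl⟩ := Nat.exists_eq_succ_of_ne_zero hx.ne'
    simp only [hF1, Nat.succ_sub_one]
    push_cast
    ring
  have e2 : ∑ p ∈ simplex (n + 1),
      (if 0 < p.2.1 then
          qInt q (n + 1 - p.2.2) / qInt q (n + 1) *
              ((p.2.1 : ℝ) / ((p.1 : ℝ) + (p.2.1 : ℝ))) * q ^ p.2.2 *
            b p.1 (p.2.1 - 1) p.2.2 * triB q (n + 1) p.1 p.2.1 p.2.2 u v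
        else 0) = ∑ p ∈ simplex n, F2 p := by
    apply shift2
    rintro ⟨x, y, z⟩ hp hy
    obtain ⟨m, rfl⟩ := Nat.exists_eq_succ_of_ne_zero hy.ne'
    simp only [hF2, Nat.succ_sub_one]
    push_cast
    ring
  have e3 : ∑ p ∈ simplex (n + 1),
      (if 0 < p.2.2 then
          qInt q (p.2.2) / qInt q (n + 1) * b p.1 p.2.1 (p.2.2 - 1) *
            triB q (n + 1) p.1 p.2.1 p.2.2 u v
        else 0) = ∑ p ∈ simplex n, F3 p := by
    apply shift3
    rintro ⟨x, y, z⟩ hp hz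
    obtain ⟨m, rfl⟩ := Nat.exists_eq_succ_of_ne_zero hz.ne'
    simp only [hF3, Nat.succ_sub_one]
    push_cast
    ring
  rw [Finset.sum_congr rfl key, Finset.sum_add_distrib, Finset.sum_add_distrib, e1, e2, e3,
    ← Finset.sum_add_distrib, ← Finset.sum_add_distrib]
  apply Finset.sum_congr rfl
  rintro ⟨x, y, z⟩ hp
  have hxyz : x + y + z = n := mem_simplex.mp hp
  rw [elev hq0 hxyz u v]
  simp only [hF1, hF2, hF3]
  ring
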